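/- Under Assumption 3, for the M̂-estimator policy π (serve query t iff r̃_t ≥ M̂_{c̃_t^π, ã_t} and c̃_t^π ≥ ã_t, for an estimator M̂ independent of the future instance I_{t+1}), for every t ∈ [T]: Myopic_t(π, c̃_t^π) ≤ 2ᾱ·E_{ã_t}[1{c̃_t^π ≥ ã_t}·Var_{I_{t+1}}(M_{c̃_t^π, ã_t}(I_{t+1}))] + E_{I_t}[G_{c̃_t^π}(I_t)] + 2ᾱ·E_{ã_t}[1{c̃_t^π ≥ ã_t}·(M̂_{c̃_t^π, ã_t} − E_{I_{t+1}}[M_{c̃_t^π, ã_t}(I_{t+1})])²], where the myopic term is defined relative to the LP relaxation V̄^Off. -/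

import Mathlib

open MeasureTheory ProbabilityTheory Set Finset
open scoped Classical

noncomputable def VOffLP (m N : ℕ) (sz : Fin N → Fin m → ℝ) (rw : Fin N → ℝ)
    (c : Fin m → ℝ) : ℝ :=
  sSup {v : ℝ | ∃ x : Fin N → ℝ, (∀ τ, x τ ∈ Icc (0:ℝ) 1) ∧
    (∀ i, ∑ τ, sz τ i * x τ ≤ c i) ∧ v = ∑ τ, rw τ * x τ}

namespace VAux

variable {m N : ℕ} {sz : Fin N → Fin m → ℝ} {rw : Fin N → ℝ} {c : Fin m → ℝ}

def VSet (m N : ℕ) (sz : Fin N → Fin m → ℝ) (rw : Fin N → ℝ) (c : Fin m → ℝ) : Set ℝ :=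
  {v : ℝ | ∃ x : Fin N → ℝ, (∀ τ, x τ ∈ Icc (0:ℝ) 1) ∧
    (∀ i, ∑ τ, sz τ i * x τ ≤ c i) ∧ v = ∑ τ, rw τ * x τ}

lemma VOffLP_eq : VOffLP m N sz rw c = sSup (VSet m N sz rw c) := rfl

/-- crude upper bound on any feasible value -/
lemma mem_le_crude {v : ℝ} (hv : v ∈ VSet m N sz rw c) : v ≤ ∑ τ, max (rw τ) 0 := by
  obtain ⟨x, hx, -, rfl⟩ := hv
  refine Finset.sum_le_sum fun τ _ => ?_
  rcases le_or_gt 0 (rw τ) with h | h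
  · have : rw τ * x τ ≤ rw τ := by nlinarith [(hx τ).2]
    exact le_trans this (le_max_left _ _)
  · exact le_trans (mul_nonpos_of_nonpos_of_nonneg h.le (hx τ).1) (le_max_right _ _)

lemma bddAbove_VSet : BddAbove (VSet m N sz rw c) :=
  ⟨_, fun _ hv => mem_le_crude hv⟩

lemma le_VOffLP {x : Fin N → ℝ} (hx : ∀ τ, x τ ∈ Icc (0:ℝ) 1)
    (hfeas : ∀ i, ∑ τ, sz τ i * x τ ≤ c i) :
    ∑ τ, rw τ * x τ ≤ VOffLP m N sz rw c :=
  le_csSup bddAbove_VSet ⟨x, hx, hfeas, rfl⟩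

lemma VOffLP_nonneg (hc : ∀ i, 0 ≤ c i) : 0 ≤ VOffLP m N sz rw c := by
  have h0 : ∑ τ, rw τ * (0:ℝ) ≤ VOffLP m N sz rw c :=
    le_VOffLP (fun τ => by constructor <;> norm_num)
      (fun i => by simpa using hc i)
  simpa using h0

/-- weak duality -/
lemma mem_le_dual {v : ℝ} (hv : v ∈ VSet m N sz rw c)
    {μd : Fin m → ℝ} (hμd : ∀ i, 0 ≤ μd i) :
    v ≤ (∑ i, c i * μd i) + ∑ τ, max (rw τ - ∑ i, sz τ i * μd i) 0 := by
  obtain ⟨x, hx, hfeas, rfl⟩ := hv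
  have key : ∀ τ, rw τ * x τ ≤ max (rw τ - ∑ i, sz τ i * μd i) 0
      + (∑ i, sz τ i * μd i) * x τ := by
    intro τ
    have h1 : rw τ * x τ = (rw τ - ∑ i, sz τ i * μd i) * x τ
        + (∑ i, sz τ i * μd i) * x τ := by ring
    rw [h1]
    have h2 : (rw τ - ∑ i, sz τ i * μd i) * x τ ≤ max (rw τ - ∑ i, sz τ i * μd i) 0 := by
      rcases le_or_gt 0 (rw τ - ∑ i, sz τ i * μd i) with h | h
      · exact le_trans (by nlinarith [(hx τ).1, (hx τ).2]) (le_max_left _ _)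
      · exact le_trans (mul_nonpos_of_nonpos_of_nonneg h.le (hx τ).1) (le_max_right _ _)
    linarith
  calc ∑ τ, rw τ * x τ
      ≤ ∑ τ, (max (rw τ - ∑ i, sz τ i * μd i) 0 + (∑ i, sz τ i * μd i) * x τ) :=
        Finset.sum_le_sum fun τ _ => key τ
    _ = (∑ τ, max (rw τ - ∑ i, sz τ i * μd i) 0) + ∑ τ, (∑ i, sz τ i * μd i) * x τ :=
        Finset.sum_add_distrib
    _ ≤ (∑ τ, max (rw τ - ∑ i, sz τ i * μd i) 0) + ∑ i, c i * μd i := by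
        have hswap : ∑ τ, (∑ i, sz τ i * μd i) * x τ = ∑ i, μd i * ∑ τ, sz τ i * x τ := by
          have h1 : ∀ τ : Fin N, (∑ i, sz τ i * μd i) * x τ = ∑ i, sz τ i * μd i * x τ := fun τ => Finset.sum_mul ..
          simp only [h1, Finset.mul_sum]
          rw [Finset.sum_comm]
          apply Finset.sum_congr rfl; intro i _
          apply Finset.sum_congr rfl; intro τ _; ring
        rw [hswap]
        have h2 : ∑ i, μd i * ∑ τ, sz τ i * x τ ≤ ∑ i, μd i * c i :=
          Finset.sum_le_sum fun i _ => mul_le_mul_of_nonneg_left (hfeas i) (hμd i)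
        have h3 : ∑ i, μd i * c i = ∑ i, c i * μd i := by
          apply Finset.sum_congr rfl; intro i _; ring
        linarith
    _ = _ := by ring


lemma VOffLP_le_dual (hc : ∀ i, 0 ≤ c i) {μd : Fin m → ℝ} (hμd : ∀ i, 0 ≤ μd i) :
    VOffLP m N sz rw c ≤ (∑ i, c i * μd i) + ∑ τ, max (rw τ - ∑ i, sz τ i * μd i) 0 := by
  apply csSup_le
  · exact ⟨0, 0, fun τ => by constructor <;> norm_num,
      fun i => by simpa using hc i, by simp⟩
  · exact fun v hv => mem_le_dual hv hμd

lemma VOffLP_eq_of_opt {x : Fin N → ℝ} (hx : ∀ τ, x τ ∈ Icc (0:ℝ) 1)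
    (hfeas : ∀ i, ∑ τ, sz τ i * x τ ≤ c i)
    (hopt : ∀ x' : Fin N → ℝ, (∀ τ, x' τ ∈ Icc (0:ℝ) 1) →
      (∀ i, ∑ τ, sz τ i * x' τ ≤ c i) → (∑ τ, rw τ * x' τ) ≤ ∑ τ, rw τ * x τ) :
    VOffLP m N sz rw c = ∑ τ, rw τ * x τ := by
  apply IsGreatest.csSup_eq
  exact ⟨⟨x, hx, hfeas, rfl⟩, fun v hv => by
    obtain ⟨x', hx', hfeas', rfl⟩ := hv; exact hopt x' hx' hfeas'⟩

lemma VOffLP_mono {c' : Fin m → ℝ} (hc : ∀ i, 0 ≤ c i) (hcc : ∀ i, c i ≤ c' i) :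
    VOffLP m N sz rw c ≤ VOffLP m N sz rw c' := by
  apply csSup_le
  · exact ⟨0, 0, fun τ => by constructor <;> norm_num,
      fun i => by simpa using hc i, by simp⟩
  · intro v hv
    obtain ⟨x, hx, hfeas, rfl⟩ := hv
    exact le_VOffLP hx (fun i => le_trans (hfeas i) (hcc i))

lemma VOffLP_lipschitz (rw' : Fin N → ℝ) :
    VOffLP m N sz rw c ≤ VOffLP m N sz rw' c + ∑ τ, |rw τ - rw' τ| := by
  by_cases hne : (VSet m N sz rw c).Nonempty
  · apply csSup_le hne
    intro v hv
    obtain ⟨x, hx, hfeas, rfl⟩ := hv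
    have h1 : ∑ τ, rw' τ * x τ ≤ VOffLP m N sz rw' c := le_VOffLP hx hfeas
    have h2 : ∑ τ, rw τ * x τ - ∑ τ, rw' τ * x τ ≤ ∑ τ, |rw τ - rw' τ| := by
      rw [← Finset.sum_sub_distrib]
      refine Finset.sum_le_sum fun τ _ => ?_
      have : rw τ * x τ - rw' τ * x τ = (rw τ - rw' τ) * x τ := by ring
      rw [this]
      calc (rw τ - rw' τ) * x τ ≤ |(rw τ - rw' τ) * x τ| := le_abs_self _
        _ = |rw τ - rw' τ| * |x τ| := abs_mul _ _
        _ ≤ |rw τ - rw' τ| * 1 := by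
            refine mul_le_mul_of_nonneg_left ?_ (abs_nonneg _)
            rw [abs_le]; exact ⟨by linarith [(hx τ).1], (hx τ).2⟩
        _ = _ := mul_one _
    linarith
  · have h2 : (VSet m N sz rw' c) = ∅ := by
      rw [Set.eq_empty_iff_forall_notMem]
      rintro v ⟨x, hx, hfeas, -⟩
      exact hne ⟨∑ τ, rw τ * x τ, x, hx, hfeas, rfl⟩
    rw [VOffLP_eq, Set.not_nonempty_iff_eq_empty.mp hne, Real.sSup_empty,
      VOffLP_eq, h2, Real.sSup_empty]
    have : (0:ℝ) ≤ ∑ τ, |rw τ - rw' τ| := Finset.sum_nonneg fun τ _ => abs_nonneg _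
    linarith

lemma VOffLP_measurable_rw (sz : Fin N → Fin m → ℝ) (c : Fin m → ℝ) :
    Measurable (fun rw : Fin N → ℝ => VOffLP m N sz rw c) := by
  have hlip : LipschitzWith N (fun rw : Fin N → ℝ => VOffLP m N sz rw c) := by
    apply LipschitzWith.of_dist_le_mul
    intro rw rw'
    rw [Real.dist_eq, abs_le]
    have key : ∀ u u' : Fin N → ℝ, VOffLP m N sz u c - VOffLP m N sz u' c ≤ N * dist u u' := by
      intro u u'
      have h1 := VOffLP_lipschitz (sz := sz) (c := c) (rw := u) u'
      have h2 : ∑ τ, |u τ - u' τ| ≤ ∑ _τ : Fin N, dist u u' := by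
        refine Finset.sum_le_sum fun τ _ => ?_
        rw [← Real.dist_eq]
        exact dist_le_pi_dist u u' τ
      simp only [Finset.sum_const, Finset.card_univ, Fintype.card_fin, nsmul_eq_mul] at h2
      linarith
    constructor
    · have := key rw' rw
      rw [dist_comm] at this
      push_cast
      linarith
    · have := key rw rw'
      push_cast
      linarith
  exact hlip.continuous.measurable


lemma VOffLP_measurable_pair {n : ℕ} (a : Fin n → Fin m → ℝ) (c : Fin m → ℝ) :
    Measurable (fun v : Fin N → Fin n × ℝ =>
      VOffLP m N (fun τ => a (v τ).1) (fun τ => (v τ).2) c) := by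
  have heq : (fun v : Fin N → Fin n × ℝ =>
      VOffLP m N (fun τ => a (v τ).1) (fun τ => (v τ).2) c)
      = fun v => ∑ pat : Fin N → Fin n,
        if (fun τ => (v τ).1) = pat then
          VOffLP m N (fun τ => a (pat τ)) (fun τ => (v τ).2) c else 0 := by
    funext v
    rw [Finset.sum_ite_eq (Finset.univ) (fun τ => (v τ).1)
      (fun pat => VOffLP m N (fun τ => a (pat τ)) (fun τ => (v τ).2) c)]
    simp
  rw [heq]
  apply Finset.measurable_sum
  intro pat _
  apply Measurable.ite
  · have h : {v : Fin N → Fin n × ℝ | (fun τ => (v τ).1) = pat}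
        = ⋂ τ : Fin N, (fun v : Fin N → Fin n × ℝ => (v τ).1) ⁻¹' {pat τ} := by
      ext v; simp [funext_iff]
    show MeasurableSet {v : Fin N → Fin n × ℝ | (fun τ => (v τ).1) = pat}
    rw [h]
    exact MeasurableSet.iInter fun τ =>
      (measurable_fst.comp (measurable_pi_apply τ)) (measurableSet_singleton _)
  · exact (VOffLP_measurable_rw (fun τ => a (pat τ)) c).comp
      (measurable_pi_lambda _ fun τ => measurable_snd.comp (measurable_pi_apply τ))
  · exact measurable_const

end VAux


open VAux

set_option maxHeartbeats 4000000 in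
/-- **Lemma (decomposition of the myopic regret).** Under Assumption 3, for the
`M̂`-estimator policy (serve iff `r̃_t ≥ M̂_{c,ã_t}` and `c ≥ ã_t`),
`Myopic_t(π,c) ≤ 2ᾱ·E_{ã_t}[1{c ≥ ã_t}·Var_{I_{t+1}}(M_{c,ã_t}(I_{t+1}))]
+ E_{I_t}[G_c(I_t)]
+ 2ᾱ·E_{ã_t}[1{c ≥ ã_t}·(M̂_{c,ã_t} − E_{I_{t+1}}[M_{c,ã_t}(I_{t+1})])²]`,
the myopic term being defined relative to the LP relaxation `V̄^Off`. -/
theorem stmt6 (m n : ℕ) (hn : 0 < n)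
    (a : Fin n → Fin m → ℝ) (ha : ∀ j i, 0 ≤ a j i)
    (p : Fin n → ℝ) (hp : ∀ j, 0 < p j) (hpsum : ∑ j, p j = 1)
    (ν : Fin n → Measure ℝ) (hprob : ∀ j, IsProbabilityMeasure (ν j))
    -- Assumption 3: compact convex Ω ⊆ ℝ^m_{≥0}, two-sided CDF condition with
    -- constants ᾱ ≥ α̲ > 0; in particular the conditional reward density is ≤ ᾱ
    (Ωset : Set (Fin m → ℝ))
    (hΩcomp : IsCompact Ωset) (hΩconv : Convex ℝ Ωset)
    (hΩpos : ∀ μd ∈ Ωset, ∀ i, 0 ≤ μd i)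
    (αl αu : ℝ) (hαl : 0 < αl) (hαu : αl ≤ αu)
    (hcond : ∀ μ' ∈ Ωset, ∀ μ'' ∈ Ωset,
      αl * ∑ j, p j * (∑ i, a j i * (μ' i - μ'' i)) ^ 2 ≤
        (∑ j, p j * (((ν j (Iic (∑ i, a j i * μ' i))).toReal
          - (ν j (Iic (∑ i, a j i * μ'' i))).toReal) * ∑ i, a j i * (μ' i - μ'' i))) ∧
      (∑ j, p j * (((ν j (Iic (∑ i, a j i * μ' i))).toReal
          - (ν j (Iic (∑ i, a j i * μ'' i))).toReal) * ∑ i, a j i * (μ' i - μ'' i))) ≤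
        αu * ∑ j, p j * (∑ i, a j i * (μ' i - μ'' i)) ^ 2)
    (hdens : ∀ j x y, x ≤ y →
      (ν j (Iic y)).toReal - (ν j (Iic x)).toReal ≤ αu * (y - x)) :
    ∀ N : ℕ, 0 < N →
    ∀ c : Fin m → ℝ, (∀ i, 0 ≤ c i) →
    ∀ (Ωs : Type) (_ : MeasurableSpace Ωs) (μ : Measure Ωs),
      IsProbabilityMeasure μ →
    -- the i.i.d. queries of `I_t` (query `0` is the current one, `1,…,N` future)
    ∀ (J : Fin (N + 1) → Ωs → Fin n) (R : Fin (N + 1) → Ωs → ℝ),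
      (∀ τ, Measurable (J τ)) → (∀ τ, Measurable (R τ)) →
      (∀ τ j, ∀ B : Set ℝ, MeasurableSet B →
        μ {ω | J τ ω = j ∧ R τ ω ∈ B} = ENNReal.ofReal (p j) * ν j B) →
      iIndepFun (fun τ ω => (J τ ω, R τ ω)) μ →
    -- Assumption 3: the per-sample-path LP relaxations admit an optimal dual in Ω
    (∀ c' : Fin m → ℝ, (∀ i, 0 ≤ c' i) → ∀ ω, ∃ μd ∈ Ωset,
      VOffLP m N (fun τ => a (J τ.succ ω)) (fun τ => R τ.succ ω) c' =
        (∑ i, c' i * μd i)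
          + ∑ τ : Fin N, max (R τ.succ ω - ∑ i, a (J τ.succ ω) i * μd i) 0) →
    -- the estimator `M̂` (a function of the capacity and the size only,
    -- independent of the future instance `I_{t+1}`)
    ∀ Mhat : (Fin m → ℝ) → (Fin m → ℝ) → ℝ,
    -- the marginal value `M_{c,a_j}(I_{t+1})` of the future instance
    ∀ Mty : Fin n → Ωs → ℝ,
      (∀ j ω, Mty j ω =
        VOffLP m N (fun τ => a (J τ.succ ω)) (fun τ => R τ.succ ω) c
        - VOffLP m N (fun τ => a (J τ.succ ω)) (fun τ => R τ.succ ω) (c - a j)) →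
    -- the policy decision `x̃_t^π`: serve iff `r̃_t ≥ M̂` and `c ≥ ã_t`
    ∀ xpi : Ωs → ℝ,
      (∀ ω, xpi ω =
        if (Mhat c (a (J 0 ω)) ≤ R 0 ω ∧ ∀ i, a (J 0 ω) i ≤ c i) then 1 else 0) →
    -- the rounded decision and the rounding gap `G_c(I_t)`
    ∀ xround : Ωs → ℝ,
      (∀ ω, xround ω =
        if (Mty (J 0 ω) ω ≤ R 0 ω ∧ ∀ i, a (J 0 ω) i ≤ c i) then 1 else 0) →
    ∀ xstar : Ωs → Fin (N + 1) → ℝ,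
      (∀ ω, (∀ τ, xstar ω τ ∈ Icc (0:ℝ) 1) ∧
        (∀ i, ∑ τ, a (J τ ω) i * xstar ω τ ≤ c i) ∧
        (∀ x' : Fin (N + 1) → ℝ, (∀ τ, x' τ ∈ Icc (0:ℝ) 1) →
          (∀ i, ∑ τ, a (J τ ω) i * x' τ ≤ c i) →
          (∑ τ, R τ ω * x' τ) ≤ ∑ τ, R τ ω * xstar ω τ)) →
    ∀ G : Ωs → ℝ,
      (∀ ω, G ω = R 0 ω * (xstar ω 0 - xround ω)
        + VOffLP m N (fun τ => a (J τ.succ ω)) (fun τ => R τ.succ ω)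
            (c - xstar ω 0 • a (J 0 ω))
        - (xround ω * VOffLP m N (fun τ => a (J τ.succ ω)) (fun τ => R τ.succ ω)
            (c - a (J 0 ω))
          + (1 - xround ω) * VOffLP m N (fun τ => a (J τ.succ ω))
              (fun τ => R τ.succ ω) c)) →
    -- decomposition of the myopic regret
    (∫ ω, (VOffLP m (N + 1) (fun τ => a (J τ ω)) (fun τ => R τ ω) c
      - VOffLP m N (fun τ => a (J τ.succ ω)) (fun τ => R τ.succ ω)
          (c - xpi ω • a (J 0 ω))
      - R 0 ω * xpi ω) ∂μ) ≤
    2 * αu * ∑ j, p j *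
        (if ∀ i, a j i ≤ c i then
          ∫ ω, (Mty j ω - ∫ ω', Mty j ω' ∂μ) ^ 2 ∂μ
        else 0)
      + ∫ ω, G ω ∂μ
      + 2 * αu * ∑ j, p j *
          (if ∀ i, a j i ≤ c i then
            (Mhat c (a j) - ∫ ω', Mty j ω' ∂μ) ^ 2
          else 0) := by
  intro N hN c hc Ωs mΩs μ hμ J R hJ hR hlaw hindep hdual Mhat Mty hMty xpi hxpi
    xround hxround xstar hxstar G hG
  -- nonemptiness of the sample space
  have hΩsne : Nonempty Ωs := by
    by_contra h
    have : μ Set.univ = 0 := by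
      have : (Set.univ : Set Ωs) = ∅ := by
        exact Set.eq_empty_iff_forall_notMem.mpr fun x _ => h ⟨x⟩
      simp [this]
    simp [measure_univ] at this
  obtain ⟨ω₀⟩ := hΩsne
  -- a nonnegative element of Ωset
  obtain ⟨μ0, hμ0Ω, -⟩ := hdual c hc ω₀
  have hμ0 : ∀ i, 0 ≤ μ0 i := hΩpos μ0 hμ0Ω
  -- uniform bound on a j · μd over Ωset
  obtain ⟨K, hK0, hK⟩ : ∃ K : ℝ, 0 ≤ K ∧ ∀ j, ∀ μd ∈ Ωset, ∑ i, a j i * μd i ≤ K := by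
    obtain ⟨C, hC⟩ := hΩcomp.isBounded.exists_norm_le
    set C' := max C 0 with hC'
    refine ⟨C' * ∑ j', ∑ i, a j' i, mul_nonneg (le_max_right _ _)
      (Finset.sum_nonneg fun j' _ => Finset.sum_nonneg fun i _ => ha j' i), fun j μd hμd => ?_⟩
    calc ∑ i, a j i * μd i ≤ ∑ i, a j i * C' := by
          refine Finset.sum_le_sum fun i _ => mul_le_mul_of_nonneg_left ?_ (ha j i)
          calc μd i ≤ |μd i| := le_abs_self _
            _ ≤ ‖μd‖ := norm_le_pi_norm μd i
            _ ≤ C := hC μd hμd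
            _ ≤ C' := le_max_left _ _
      _ = (∑ i, a j i) * C' := by rw [← Finset.sum_mul]
      _ ≤ (∑ j', ∑ i, a j' i) * C' := by
          refine mul_le_mul_of_nonneg_right ?_ (le_max_right _ _)
          exact Finset.single_le_sum (f := fun j' => ∑ i, a j' i)
            (fun j' _ => Finset.sum_nonneg fun i _ => ha j' i) (Finset.mem_univ j)
      _ = _ := mul_comm _ _
  -- abbreviation for the future LP value
  set Vf : (Fin m → ℝ) → Ωs → ℝ := fun c' ω =>
    VOffLP m N (fun τ => a (J τ.succ ω)) (fun τ => R τ.succ ω) c' with hVf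
  -- measurability of the future LP value
  have hVfmeas : ∀ c' : Fin m → ℝ, Measurable (Vf c') := by
    intro c'
    have heq : Vf c' = fun ω => ∑ pat : Fin N → Fin n,
        if (fun τ => J τ.succ ω) = pat then
          VOffLP m N (fun τ => a (pat τ)) (fun τ => R τ.succ ω) c' else 0 := by
      funext ω
      rw [Finset.sum_ite_eq (Finset.univ) (fun τ => J τ.succ ω)
        (fun pat => VOffLP m N (fun τ => a (pat τ)) (fun τ => R τ.succ ω) c')]
      simp [hVf]
    rw [heq]
    apply Finset.measurable_sum
    intro pat _
    apply Measurable.ite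
    · have h : {ω : Ωs | (fun τ => J τ.succ ω) = pat}
          = ⋂ τ : Fin N, (J τ.succ) ⁻¹' {pat τ} := by
        ext ω; simp [funext_iff]
      show MeasurableSet {ω : Ωs | (fun τ => J τ.succ ω) = pat}
      rw [h]
      exact MeasurableSet.iInter fun τ => (hJ τ.succ) (measurableSet_singleton _)
    · exact (VOffLP_measurable_rw (fun τ => a (pat τ)) c').comp
        (measurable_pi_lambda _ fun τ => hR τ.succ)
    · exact measurable_const
  -- Mty in terms of Vf
  have hMty' : ∀ j, Mty j = fun ω => Vf c ω - Vf (c - a j) ω := by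
    intro j; funext ω; exact hMty j ω
  have hMtymeas : ∀ j, Measurable (Mty j) := by
    intro j; rw [hMty' j]; exact (hVfmeas c).sub (hVfmeas (c - a j))
  -- bounds on Mty
  have hMtyb : ∀ j, (∀ i, a j i ≤ c i) → ∀ ω, 0 ≤ Mty j ω ∧ Mty j ω ≤ K := by
    intro j hcond ω
    have hcaj : ∀ i, 0 ≤ (c - a j) i := fun i => by
      simpa [Pi.sub_apply] using sub_nonneg.mpr (hcond i)
    constructor
    · rw [hMty']
      simp only [sub_nonneg]
      exact VOffLP_mono hcaj (fun i => by simp [Pi.sub_apply, ha j i])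
    · obtain ⟨μd, hμdΩ, hrep⟩ := hdual (c - a j) hcaj ω
      have h1 := VOffLP_le_dual (m := m) (N := N) (sz := fun τ => a (J τ.succ ω))
        (rw := fun τ => R τ.succ ω) hc (hΩpos μd hμdΩ)
      have h2 : ∑ i, c i * μd i - ∑ i, (c - a j) i * μd i = ∑ i, a j i * μd i := by
        rw [← Finset.sum_sub_distrib]
        apply Finset.sum_congr rfl
        intro i _; simp [Pi.sub_apply]; ring
      have h3 := hK j μd hμdΩ
      rw [hMty' j]
      simp only [hVf] at hrep ⊢
      linarith
  -- the split of the (N+1)-query LP at the optimal solution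
  have hsplit : ∀ ω, VOffLP m (N+1) (fun τ => a (J τ ω)) (fun τ => R τ ω) c
      = R 0 ω * xstar ω 0 + Vf (c - xstar ω 0 • a (J 0 ω)) ω := by
    intro ω
    obtain ⟨hxs1, hxs2, hxs3⟩ := hxstar ω
    have hval : VOffLP m (N+1) (fun τ => a (J τ ω)) (fun τ => R τ ω) c
        = ∑ τ, R τ ω * xstar ω τ := VOffLP_eq_of_opt hxs1 hxs2 hxs3
    have hcap : ∀ i, ∑ τ : Fin N, a (J τ.succ ω) i * xstar ω τ.succ
        ≤ c i - xstar ω 0 * a (J 0 ω) i := by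
      intro i
      have := hxs2 i
      rw [Fin.sum_univ_succ] at this
      linarith [this]
    have hcap0 : ∀ i, 0 ≤ c i - xstar ω 0 * a (J 0 ω) i := by
      intro i
      have h1 := hcap i
      have h2 : (0:ℝ) ≤ ∑ τ : Fin N, a (J τ.succ ω) i * xstar ω τ.succ :=
        Finset.sum_nonneg fun τ _ => mul_nonneg (ha _ i) (hxs1 τ.succ).1
      linarith
    have hsmul : ∀ i, (c - xstar ω 0 • a (J 0 ω)) i = c i - xstar ω 0 * a (J 0 ω) i := by
      intro i; simp [Pi.sub_apply, Pi.smul_apply, smul_eq_mul]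
    have hle1 : ∑ τ : Fin N, R τ.succ ω * xstar ω τ.succ
        ≤ Vf (c - xstar ω 0 • a (J 0 ω)) ω := by
      apply le_VOffLP (fun τ => hxs1 τ.succ)
      intro i; rw [hsmul i]; exact hcap i
    have hle2 : Vf (c - xstar ω 0 • a (J 0 ω)) ω
        ≤ ∑ τ : Fin N, R τ.succ ω * xstar ω τ.succ := by
      apply csSup_le
      · refine ⟨0, 0, fun τ => by constructor <;> norm_num, fun i => by
          rw [hsmul i]; simpa using hcap0 i, by simp⟩
      · rintro v ⟨x', hx', hf', rfl⟩
        set y : Fin (N+1) → ℝ := Fin.cases (xstar ω 0) x' with hy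
        have hy0 : y 0 = xstar ω 0 := rfl
        have hys : ∀ τ : Fin N, y τ.succ = x' τ := fun τ => rfl
        have hyIcc : ∀ τ, y τ ∈ Icc (0:ℝ) 1 := by
          intro τ
          refine Fin.cases ?_ ?_ τ
          · exact hxs1 0
          · intro τ'; exact hx' τ'
        have hyfeas : ∀ i, ∑ τ, a (J τ ω) i * y τ ≤ c i := by
          intro i
          rw [Fin.sum_univ_succ]
          have := hf' i
          rw [hsmul i] at this
          simp only [hy0, hys]
          linarith [this]
        have := hxs3 y hyIcc hyfeas
        rw [Fin.sum_univ_succ, Fin.sum_univ_succ] at this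
        simp only [hy0, hys] at this
        linarith
    rw [hval, Fin.sum_univ_succ]
    linarith
  -- the policy/rounding gap term
  set diff : Ωs → ℝ := fun ω => (xround ω - xpi ω) * (R 0 ω - Mty (J 0 ω) ω) with hdiffdef
  have hdiffω : ∀ ω, diff ω = (xround ω - xpi ω) * (R 0 ω - Mty (J 0 ω) ω) := fun ω => rfl
  -- pointwise decomposition of the myopic integrand
  have hpoint : ∀ ω, VOffLP m (N+1) (fun τ => a (J τ ω)) (fun τ => R τ ω) c
      - Vf (c - xpi ω • a (J 0 ω)) ω - R 0 ω * xpi ω = G ω + diff ω := by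
    intro ω
    have hsp := hsplit ω
    have hxpisplit : Vf (c - xpi ω • a (J 0 ω)) ω
        = xpi ω * Vf (c - a (J 0 ω)) ω + (1 - xpi ω) * Vf c ω := by
      rw [hxpi ω]
      by_cases hcnd : (Mhat c (a (J 0 ω)) ≤ R 0 ω ∧ ∀ i, a (J 0 ω) i ≤ c i)
      · rw [if_pos hcnd, one_smul]; ring
      · rw [if_neg hcnd, zero_smul, sub_zero]; ring
    have hMeq : Mty (J 0 ω) ω = Vf c ω - Vf (c - a (J 0 ω)) ω := hMty _ ω
    rw [hsp, hxpisplit, hG ω, hdiffω ω, hMeq]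
    ring
  have hLHSfun : (fun ω => VOffLP m (N+1) (fun τ => a (J τ ω)) (fun τ => R τ ω) c
      - Vf (c - xpi ω • a (J 0 ω)) ω - R 0 ω * xpi ω) = fun ω => G ω + diff ω :=
    funext hpoint
  -- bound on the estimators
  set CM : ℝ := ∑ j, |Mhat c (a j)| with hCM
  have hCMb : ∀ j, |Mhat c (a j)| ≤ CM :=
    fun j => Finset.single_le_sum (f := fun j => |Mhat c (a j)|)
      (fun j' _ => abs_nonneg _) (Finset.mem_univ j)
  have hCM0 : 0 ≤ CM := Finset.sum_nonneg fun j' _ => abs_nonneg _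
  set C : ℝ := CM + K with hC
  have hC0 : 0 ≤ C := by simp only [hC]; linarith
  -- pointwise bound on diff
  have hdiffbd : ∀ ω, |diff ω| ≤ C := by
    intro ω
    rw [hdiffω ω, hxround ω, hxpi ω]
    by_cases hcnd : ∀ i, a (J 0 ω) i ≤ c i
    · obtain ⟨hMt0, hMtK⟩ := hMtyb (J 0 ω) hcnd ω
      have hMh1 := hCMb (J 0 ω)
      have hMh2 := le_abs_self (Mhat c (a (J 0 ω)))
      have hMh3 := neg_abs_le (Mhat c (a (J 0 ω)))
      by_cases h1 : Mty (J 0 ω) ω ≤ R 0 ω <;> by_cases h2 : Mhat c (a (J 0 ω)) ≤ R 0 ω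
      · rw [if_pos ⟨h1, hcnd⟩, if_pos ⟨h2, hcnd⟩]; simpa using hC0
      · rw [if_pos ⟨h1, hcnd⟩, if_neg (fun h => h2 h.1)]
        rw [abs_of_nonneg (by nlinarith)]
        push_neg at h2
        simp only [hC]
        nlinarith
      · rw [if_neg (fun h => h1 h.1), if_pos ⟨h2, hcnd⟩]
        push_neg at h1
        rw [abs_of_nonneg (by nlinarith)]
        simp only [hC]
        nlinarith
      · rw [if_neg (fun h => h1 h.1), if_neg (fun h => h2 h.1)]; simpa using hC0
    · rw [if_neg (fun h => hcnd h.2), if_neg (fun h => hcnd h.2)]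
      simpa using hC0
  -- measurability of the policy decisions and of diff
  have hJ0set : ∀ j : Fin n, MeasurableSet {ω : Ωs | J 0 ω = j} :=
    fun j => (hJ 0) (measurableSet_singleton j)
  have hMtyJ0 : Measurable (fun ω => Mty (J 0 ω) ω) := by
    have heq : (fun ω => Mty (J 0 ω) ω)
        = fun ω => ∑ j, if J 0 ω = j then Mty j ω else 0 := by
      funext ω
      rw [Finset.sum_ite_eq (Finset.univ) (J 0 ω) (fun j => Mty j ω)]
      simp
    rw [heq]
    exact Finset.measurable_sum _ fun j _ =>
      Measurable.ite (hJ0set j) (hMtymeas j) measurable_const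
  have hxpimeas : Measurable xpi := by
    have heq : xpi = fun ω => ∑ j, if J 0 ω = j then
        (if (Mhat c (a j) ≤ R 0 ω ∧ ∀ i, a j i ≤ c i) then (1:ℝ) else 0) else 0 := by
      funext ω
      rw [Finset.sum_ite_eq (Finset.univ) (J 0 ω)
        (fun j => if (Mhat c (a j) ≤ R 0 ω ∧ ∀ i, a j i ≤ c i) then (1:ℝ) else 0)]
      simp only [Finset.mem_univ, if_true]
      exact hxpi ω
    rw [heq]
    refine Finset.measurable_sum _ fun j _ => Measurable.ite (hJ0set j) ?_ measurable_const
    by_cases hcnd : ∀ i, a j i ≤ c i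
    · refine Measurable.ite ?_ measurable_const measurable_const
      have : {ω : Ωs | Mhat c (a j) ≤ R 0 ω ∧ ∀ i, a j i ≤ c i}
          = {ω : Ωs | Mhat c (a j) ≤ R 0 ω} := by ext ω; simp [hcnd]
      rw [this]
      exact measurableSet_le measurable_const (hR 0)
    · have : (fun ω : Ωs => if (Mhat c (a j) ≤ R 0 ω ∧ ∀ i, a j i ≤ c i) then (1:ℝ) else 0)
          = fun _ => 0 := by
        funext ω; rw [if_neg (fun h => hcnd h.2)]
      rw [this]; exact measurable_const
  have hxroundmeas : Measurable xround := by
    have heq : xround = fun ω => ∑ j, if J 0 ω = j then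
        (if (Mty j ω ≤ R 0 ω ∧ ∀ i, a j i ≤ c i) then (1:ℝ) else 0) else 0 := by
      funext ω
      rw [Finset.sum_ite_eq (Finset.univ) (J 0 ω)
        (fun j => if (Mty j ω ≤ R 0 ω ∧ ∀ i, a j i ≤ c i) then (1:ℝ) else 0)]
      simp only [Finset.mem_univ, if_true]
      rw [hxround ω]
    rw [heq]
    refine Finset.measurable_sum _ fun j _ => Measurable.ite (hJ0set j) ?_ measurable_const
    by_cases hcnd : ∀ i, a j i ≤ c i
    · refine Measurable.ite ?_ measurable_const measurable_const
      have : {ω : Ωs | Mty j ω ≤ R 0 ω ∧ ∀ i, a j i ≤ c i}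
          = {ω : Ωs | Mty j ω ≤ R 0 ω} := by ext ω; simp [hcnd]
      rw [this]
      exact measurableSet_le (hMtymeas j) (hR 0)
    · have : (fun ω : Ωs => if (Mty j ω ≤ R 0 ω ∧ ∀ i, a j i ≤ c i) then (1:ℝ) else 0)
          = fun _ => 0 := by
        funext ω; rw [if_neg (fun h => hcnd h.2)]
      rw [this]; exact measurable_const
  have hdiffmeas : Measurable diff :=
    (hxroundmeas.sub hxpimeas).mul ((hR 0).sub hMtyJ0)
  have hdiffint : Integrable diff μ := by
    refine (integrable_const C).mono' hdiffmeas.aestronglyMeasurable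
      (Filter.Eventually.of_forall fun ω => ?_)
    simpa [Real.norm_eq_abs] using hdiffbd ω
  -- nonnegativity of the variance and bias terms
  have hαu0 : (0:ℝ) < αu := lt_of_lt_of_le hαl hαu
  have hA : 0 ≤ 2 * αu * ∑ j, p j *
      (if ∀ i, a j i ≤ c i then ∫ ω, (Mty j ω - ∫ ω', Mty j ω' ∂μ) ^ 2 ∂μ else 0) := by
    refine mul_nonneg (by linarith) (Finset.sum_nonneg fun j _ => mul_nonneg (hp j).le ?_)
    split
    · exact integral_nonneg fun ω => sq_nonneg _
    · exact le_refl 0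
  have hB : 0 ≤ 2 * αu * ∑ j, p j *
      (if ∀ i, a j i ≤ c i then (Mhat c (a j) - ∫ ω', Mty j ω' ∂μ) ^ 2 else 0) := by
    refine mul_nonneg (by linarith) (Finset.sum_nonneg fun j _ => mul_nonneg (hp j).le ?_)
    split
    · exact sq_nonneg _
    · exact le_refl 0
  have hint_eq : (∫ ω, (VOffLP m (N + 1) (fun τ => a (J τ ω)) (fun τ => R τ ω) c
      - VOffLP m N (fun τ => a (J τ.succ ω)) (fun τ => R τ.succ ω)
          (c - xpi ω • a (J 0 ω))
      - R 0 ω * xpi ω) ∂μ) = ∫ ω, (G ω + diff ω) ∂μ :=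
    integral_congr_ae (Filter.Eventually.of_forall hpoint)
  rw [hint_eq]
  by_cases hGint : Integrable G μ
  · rw [integral_add hGint hdiffint]
    have hmain : ∫ ω, diff ω ∂μ ≤ (2 * αu * ∑ j, p j *
        (if ∀ i, a j i ≤ c i then ∫ ω, (Mty j ω - ∫ ω', Mty j ω' ∂μ) ^ 2 ∂μ else 0))
        + (2 * αu * ∑ j, p j *
        (if ∀ i, a j i ≤ c i then (Mhat c (a j) - ∫ ω', Mty j ω' ∂μ) ^ 2 else 0)) := by
      -- density bound on intervals
      have hIco : ∀ (j : Fin n) (x y : ℝ), x ≤ y → ((ν j) (Ico x y)).toReal ≤ αu * (y - x) := by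
        intro j x y hxy
        have hfin : ∀ s : Set ℝ, (ν j) s ≠ ⊤ := fun s => measure_ne_top _ s
        refine le_of_forall_pos_le_add fun ε hε => ?_
        set δ := ε / αu with hδdef
        have hδ : 0 < δ := div_pos hε hαu0
        have hsub : Ico x y ⊆ Iic y \ Iic (x - δ) := by
          rintro r ⟨hr1, hr2⟩
          exact ⟨hr2.le, fun hr3 => by simp at hr3; linarith⟩
        have h1 : (ν j) (Ico x y) ≤ (ν j) (Iic y \ Iic (x - δ)) := measure_mono hsub
        have h2 : (ν j) (Iic y \ Iic (x - δ)) = (ν j) (Iic y) - (ν j) (Iic (x - δ)) :=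
          measure_diff (Set.Iic_subset_Iic.mpr (by linarith)) measurableSet_Iic.nullMeasurableSet
            (hfin _)
        have h3 : ((ν j) (Ico x y)).toReal ≤ ((ν j) (Iic y)).toReal - ((ν j) (Iic (x - δ))).toReal := by
          rw [← ENNReal.toReal_sub_of_le (measure_mono (Set.Iic_subset_Iic.mpr (by linarith))) (hfin _),
            ← h2]
          exact ENNReal.toReal_mono (by rw [h2]; exact ne_top_of_le_ne_top (hfin _) tsub_le_self) h1
        have h4 := hdens j (x - δ) y (by linarith)
        have h5 : αu * (y - (x - δ)) = αu * (y - x) + ε := by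
          rw [hδdef]; field_simp; ring
        linarith
      -- the pointwise comparison function
      set φf : Fin n → ℝ → ℝ → ℝ := fun j r y =>
        ((if y ≤ r then (1:ℝ) else 0) - (if Mhat c (a j) ≤ r then 1 else 0)) * (r - y)
        with hφf
      have hφval : ∀ j r y, φf j r y =
          ((if y ≤ r then (1:ℝ) else 0) - (if Mhat c (a j) ≤ r then 1 else 0)) * (r - y) :=
        fun _ _ _ => rfl
      have hφnonneg : ∀ j r y, 0 ≤ φf j r y := by
        intro j r y
        rw [hφval]
        by_cases h1 : y ≤ r <;> by_cases h2 : Mhat c (a j) ≤ r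
        · rw [if_pos h1, if_pos h2]; norm_num
        · rw [if_pos h1, if_neg h2]; push_neg at h2; nlinarith
        · rw [if_neg h1, if_pos h2]; push_neg at h1; nlinarith
        · rw [if_neg h1, if_neg h2]; norm_num
      have hφmeas : ∀ j y, Measurable (fun r => φf j r y) := by
        intro j y
        apply Measurable.mul
        · exact ((measurable_const.ite (measurableSet_le measurable_const measurable_id)
            measurable_const).sub (measurable_const.ite
            (measurableSet_le measurable_const measurable_id) measurable_const))
        · exact measurable_id.sub measurable_const
      -- the key one-dimensional estimate
      have hφν : ∀ j y, ∫ r, φf j r y ∂(ν j) ≤ αu * (Mhat c (a j) - y)^2 := by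
        intro j y
        rcases le_or_gt y (Mhat c (a j)) with hcase | hcase
        · have hle : ∀ r, φf j r y
              ≤ Set.indicator (Ico y (Mhat c (a j))) (fun _ => Mhat c (a j) - y) r := by
            intro r
            have hind : (0:ℝ) ≤ Set.indicator (Ico y (Mhat c (a j)))
                (fun _ => Mhat c (a j) - y) r :=
              Set.indicator_nonneg (fun _ _ => by linarith) r
            rw [hφval]
            by_cases h1 : y ≤ r <;> by_cases h2 : Mhat c (a j) ≤ r
            · rw [if_pos h1, if_pos h2]
              calc ((1:ℝ) - 1) * (r - y) = 0 := by ring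
                _ ≤ _ := hind
            · rw [if_pos h1, if_neg h2,
                Set.indicator_of_mem (Set.mem_Ico.mpr ⟨h1, lt_of_not_ge h2⟩)]
              push_neg at h2; nlinarith
            · push_neg at h1; linarith
            · rw [if_neg h1, if_neg h2]
              calc ((0:ℝ) - 0) * (r - y) = 0 := by ring
                _ ≤ _ := hind
          calc ∫ r, φf j r y ∂(ν j)
              ≤ ∫ r, Set.indicator (Ico y (Mhat c (a j)))
                  (fun _ => Mhat c (a j) - y) r ∂(ν j) := by
                refine integral_mono_of_nonneg
                  (Filter.Eventually.of_forall fun r => hφnonneg j r y)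
                  ((integrable_const _).indicator measurableSet_Ico)
                  (Filter.Eventually.of_forall hle)
            _ = ((ν j) (Ico y (Mhat c (a j)))).toReal * (Mhat c (a j) - y) := by
                rw [integral_indicator_const _ measurableSet_Ico, smul_eq_mul, Measure.real]
            _ ≤ (αu * (Mhat c (a j) - y)) * (Mhat c (a j) - y) :=
                mul_le_mul_of_nonneg_right (hIco j y (Mhat c (a j)) hcase) (by linarith)
            _ = αu * (Mhat c (a j) - y)^2 := by ring
        · have hle : ∀ r, φf j r y
              ≤ Set.indicator (Ico (Mhat c (a j)) y) (fun _ => y - Mhat c (a j)) r := by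
            intro r
            have hind : (0:ℝ) ≤ Set.indicator (Ico (Mhat c (a j)) y)
                (fun _ => y - Mhat c (a j)) r :=
              Set.indicator_nonneg (fun _ _ => by linarith) r
            rw [hφval]
            by_cases h1 : y ≤ r <;> by_cases h2 : Mhat c (a j) ≤ r
            · rw [if_pos h1, if_pos h2]
              calc ((1:ℝ) - 1) * (r - y) = 0 := by ring
                _ ≤ _ := hind
            · push_neg at h2; linarith
            · push_neg at h1
              rw [if_neg (not_le.mpr h1), if_pos h2,
                Set.indicator_of_mem (Set.mem_Ico.mpr ⟨h2, h1⟩)]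
              nlinarith
            · rw [if_neg h1, if_neg h2]
              calc ((0:ℝ) - 0) * (r - y) = 0 := by ring
                _ ≤ _ := hind
          calc ∫ r, φf j r y ∂(ν j)
              ≤ ∫ r, Set.indicator (Ico (Mhat c (a j)) y)
                  (fun _ => y - Mhat c (a j)) r ∂(ν j) := by
                refine integral_mono_of_nonneg
                  (Filter.Eventually.of_forall fun r => hφnonneg j r y)
                  ((integrable_const _).indicator measurableSet_Ico)
                  (Filter.Eventually.of_forall hle)
            _ = ((ν j) (Ico (Mhat c (a j)) y)).toReal * (y - Mhat c (a j)) := by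
                rw [integral_indicator_const _ measurableSet_Ico, smul_eq_mul, Measure.real]
            _ ≤ (αu * (y - Mhat c (a j))) * (y - Mhat c (a j)) :=
                mul_le_mul_of_nonneg_right (hIco j (Mhat c (a j)) y hcase.le) (by linarith)
            _ = αu * (Mhat c (a j) - y)^2 := by ring
      -- the law of the current query
      have hlawint : ∀ (j : Fin n) (g : ℝ → ℝ), Measurable g →
          ∫ ω, (if J 0 ω = j then g (R 0 ω) else 0) ∂μ = p j * ∫ r, g r ∂(ν j) := by
        intro j g hg
        have h1 : (fun ω => if J 0 ω = j then g (R 0 ω) else 0)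
            = Set.indicator {ω | J 0 ω = j} (fun ω => g (R 0 ω)) := by
          funext ω
          by_cases h : J 0 ω = j
          · rw [if_pos h, Set.indicator_of_mem (show ω ∈ {ω : Ωs | J 0 ω = j} from h)]
          · rw [if_neg h, Set.indicator_of_notMem (show ω ∉ {ω : Ωs | J 0 ω = j} from h)]
        rw [h1, integral_indicator (hJ0set j),
          ← integral_map (hR 0).aemeasurable hg.aestronglyMeasurable]
        have hmeq : Measure.map (R 0) (μ.restrict {ω | J 0 ω = j})
            = (ENNReal.ofReal (p j)) • ν j := by
          ext B hB
          rw [Measure.map_apply (hR 0) hB, Measure.restrict_apply ((hR 0) hB)]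
          have hseq : (R 0 ⁻¹' B) ∩ {ω | J 0 ω = j} = {ω | J 0 ω = j ∧ R 0 ω ∈ B} := by
            ext ω
            constructor
            · rintro ⟨hb, hj⟩; exact ⟨hj, hb⟩
            · rintro ⟨hj, hb⟩; exact ⟨hb, hj⟩
          rw [hseq, hlaw 0 j B hB, Measure.smul_apply, smul_eq_mul]
        rw [hmeq, integral_smul_measure, ENNReal.toReal_ofReal (hp j).le, smul_eq_mul]
      -- independence of the current query and the future marginal value
      have hWmeas : ∀ τ : Fin (N+1), Measurable (fun ω => (J τ ω, R τ ω)) :=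
        fun τ => (hJ τ).prodMk (hR τ)
      have hXmeas : Measurable (fun ω => (J 0 ω, R 0 ω)) := hWmeas 0
      have hindepj : ∀ j : Fin n, IndepFun (fun ω => (J 0 ω, R 0 ω)) (Mty j) μ := by
        intro j
        have hbase := hindep.indepFun_finset {0} {0}ᶜ disjoint_compl_right hWmeas
        have hmem : ∀ τ : Fin N, τ.succ ∈ ({0}ᶜ : Finset (Fin (N+1))) := by
          intro τ
          simp [Fin.succ_ne_zero]
        set Ψ1 : ((({0} : Finset (Fin (N+1))) : Type) → Fin n × ℝ) → Fin n × ℝ :=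
          fun g => g ⟨0, by simp⟩ with hΨ1
        set Ψ2 : ((({0}ᶜ : Finset (Fin (N+1))) : Type) → Fin n × ℝ) → ℝ := fun g =>
          VOffLP m N (fun τ => a (g ⟨τ.succ, hmem τ⟩).1)
              (fun τ => (g ⟨τ.succ, hmem τ⟩).2) c
            - VOffLP m N (fun τ => a (g ⟨τ.succ, hmem τ⟩).1)
              (fun τ => (g ⟨τ.succ, hmem τ⟩).2) (c - a j)
          with hΨ2
        have hΨ1m : Measurable Ψ1 := measurable_pi_apply _
        have hΨ2m : Measurable Ψ2 := by
          have hproj : Measurable (fun g : ((({0}ᶜ : Finset (Fin (N+1))) : Type) → Fin n × ℝ) =>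
              (fun τ : Fin N => g ⟨τ.succ, hmem τ⟩)) :=
            measurable_pi_lambda _ fun τ => measurable_pi_apply _
          exact ((VOffLP_measurable_pair a c).comp hproj).sub
            ((VOffLP_measurable_pair a (c - a j)).comp hproj)
        have hcompi := hbase.comp hΨ1m hΨ2m
        have he1 : (Ψ1 ∘ fun ω (i : (({0} : Finset (Fin (N+1))) : Type)) => (J i ω, R i ω))
            = fun ω => (J 0 ω, R 0 ω) := rfl
        have he2 : (Ψ2 ∘ fun ω (i : (({0}ᶜ : Finset (Fin (N+1))) : Type)) => (J i ω, R i ω))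
            = Mty j := by
          funext ω
          rw [Function.comp_apply, hΨ2, hMty j ω]
        rwa [he1, he2] at hcompi
      -- uniform bound on φf along Mty
      have hφbd : ∀ (j : Fin n) (r y : ℝ), 0 ≤ y → y ≤ K → |φf j r y| ≤ C := by
        intro j r y h0 hKy
        have h2 := hCMb j
        have h3 := le_abs_self (Mhat c (a j))
        have h4 := neg_abs_le (Mhat c (a j))
        rw [hφval]
        by_cases h5 : y ≤ r <;> by_cases h6 : Mhat c (a j) ≤ r
        · rw [if_pos h5, if_pos h6, show ((1:ℝ) - 1) * (r - y) = 0 by ring, abs_zero]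
          exact hC0
        · rw [if_pos h5, if_neg h6]
          push_neg at h6
          rw [abs_of_nonneg (by nlinarith)]
          simp only [hC]
          nlinarith
        · rw [if_neg h5, if_pos h6]
          push_neg at h5
          rw [abs_of_nonneg (by nlinarith)]
          simp only [hC]
          nlinarith
        · rw [if_neg h5, if_neg h6, show ((0:ℝ) - 0) * (r - y) = 0 by ring, abs_zero]
          exact hC0
      -- the per-type estimate via independence and Fubini
      have hIj : ∀ j : Fin n, (∀ i, a j i ≤ c i) →
          ∫ ω, (if J 0 ω = j then φf j (R 0 ω) (Mty j ω) else 0) ∂μ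
          ≤ p j * (αu * ∫ ω, (Mhat c (a j) - Mty j ω)^2 ∂μ) := by
        intro j hcnd
        set Ψ : (Fin n × ℝ) × ℝ → ℝ :=
          fun z => if z.1.1 = j then φf j z.1.2 z.2 else 0 with hΨ
        have hsetz : MeasurableSet {z : (Fin n × ℝ) × ℝ | z.1.1 = j} :=
          (measurable_fst.comp measurable_fst) (measurableSet_singleton j)
        have hφz : Measurable (fun z : (Fin n × ℝ) × ℝ => φf j z.1.2 z.2) := by
          simp only [hφval]
          apply Measurable.mul
          · exact (Measurable.ite (measurableSet_le measurable_snd (measurable_fst.snd))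
              measurable_const measurable_const).sub
              (Measurable.ite (measurableSet_le measurable_const (measurable_fst.snd))
              measurable_const measurable_const)
          · exact (measurable_fst.snd).sub measurable_snd
        have hΨmeas : Measurable Ψ :=
          Measurable.ite hsetz hφz measurable_const
        have hpairm : Measurable (fun ω => ((J 0 ω, R 0 ω), Mty j ω)) :=
          hXmeas.prodMk (hMtymeas j)
        have hZint : Integrable (fun ω => Ψ ((J 0 ω, R 0 ω), Mty j ω)) μ := by
          refine (integrable_const C).mono'
            (hΨmeas.comp hpairm).aestronglyMeasurable
            (Filter.Eventually.of_forall fun ω => ?_)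
          rw [Real.norm_eq_abs]
          simp only [hΨ]
          by_cases h : J 0 ω = j
          · rw [if_pos h]
            exact hφbd j _ _ (hMtyb j hcnd ω).1 (hMtyb j hcnd ω).2
          · rw [if_neg h, abs_zero]; exact hC0
        have hmapXY := (indepFun_iff_map_prod_eq_prod_map_map hXmeas.aemeasurable
          (hMtymeas j).aemeasurable).mp (hindepj j)
        have hΨprodint : Integrable Ψ ((μ.map (fun ω => (J 0 ω, R 0 ω))).prod (μ.map (Mty j))) := by
          rw [← hmapXY]
          exact (integrable_map_measure hΨmeas.aestronglyMeasurable
            hpairm.aemeasurable).mpr hZint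
        have hupmeas : Measurable (fun ω => p j * (αu * (Mhat c (a j) - Mty j ω)^2)) :=
          measurable_const.mul (measurable_const.mul
            ((measurable_const.sub (hMtymeas j)).pow_const 2))
        have hupint : Integrable (fun ω => p j * (αu * (Mhat c (a j) - Mty j ω)^2)) μ := by
          refine (integrable_const (p j * (αu * (CM + K)^2))).mono'
            hupmeas.aestronglyMeasurable (Filter.Eventually.of_forall fun ω => ?_)
          rw [Real.norm_eq_abs]
          have h1 := (hMtyb j hcnd ω).1
          have h2 := (hMtyb j hcnd ω).2
          have h3 := hCMb j
          have h4 := le_abs_self (Mhat c (a j))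
          have h5 := neg_abs_le (Mhat c (a j))
          have h6 : (Mhat c (a j) - Mty j ω)^2 ≤ (CM + K)^2 := by nlinarith
          rw [abs_of_nonneg (mul_nonneg (hp j).le (mul_nonneg hαu0.le (sq_nonneg _)))]
          have h7 : (0:ℝ) ≤ p j * αu := mul_nonneg (hp j).le hαu0.le
          nlinarith
        calc ∫ ω, (if J 0 ω = j then φf j (R 0 ω) (Mty j ω) else 0) ∂μ
            = ∫ z, Ψ z ∂(Measure.map (fun ω => ((J 0 ω, R 0 ω), Mty j ω)) μ) :=
              (integral_map hpairm.aemeasurable hΨmeas.aestronglyMeasurable).symm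
          _ = ∫ z, Ψ z ∂((μ.map (fun ω => (J 0 ω, R 0 ω))).prod (μ.map (Mty j))) := by
              rw [hmapXY]
          _ = ∫ y, (∫ x, Ψ (x, y) ∂(μ.map (fun ω => (J 0 ω, R 0 ω)))) ∂(μ.map (Mty j)) :=
              integral_prod_symm Ψ hΨprodint
          _ ≤ ∫ y, p j * (αu * (Mhat c (a j) - y)^2) ∂(μ.map (Mty j)) := by
              refine integral_mono_of_nonneg ?_ ?_ ?_
              · refine Filter.Eventually.of_forall fun y => integral_nonneg fun x => ?_
                simp only [hΨ]
                split
                · exact hφnonneg j _ _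
                · exact le_refl 0
              · exact (integrable_map_measure
                  (g := fun y => p j * (αu * (Mhat c (a j) - y)^2))
                  (measurable_const.mul (measurable_const.mul
                    ((measurable_const.sub measurable_id).pow_const 2))).aestronglyMeasurable
                  (hMtymeas j).aemeasurable).mpr hupint
              · refine Filter.Eventually.of_forall fun y => ?_
                calc ∫ x, Ψ (x, y) ∂(μ.map (fun ω => (J 0 ω, R 0 ω)))
                    = ∫ ω, Ψ ((J 0 ω, R 0 ω), y) ∂μ :=
                      integral_map hXmeas.aemeasurable
                        (hΨmeas.comp (measurable_id.prodMk measurable_const)).aestronglyMeasurable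
                  _ = ∫ ω, (if J 0 ω = j then φf j (R 0 ω) y else 0) ∂μ := rfl
                  _ = p j * ∫ r, φf j r y ∂(ν j) := hlawint j (fun r => φf j r y) (hφmeas j y)
                  _ ≤ p j * (αu * (Mhat c (a j) - y)^2) :=
                      mul_le_mul_of_nonneg_left (hφν j y) (hp j).le
          _ = ∫ ω, p j * (αu * (Mhat c (a j) - Mty j ω)^2) ∂μ :=
              integral_map (hMtymeas j).aemeasurable
                (measurable_const.mul (measurable_const.mul
                  ((measurable_const.sub measurable_id).pow_const 2))).aestronglyMeasurable
          _ = p j * (αu * ∫ ω, (Mhat c (a j) - Mty j ω)^2 ∂μ) := by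
              rw [integral_const_mul, integral_const_mul]
      -- decomposition of diff over types
      have hdiffsum : ∀ ω, diff ω = ∑ j, (if J 0 ω = j then
          (if (∀ i, a j i ≤ c i) then φf j (R 0 ω) (Mty j ω) else 0) else 0) := by
        intro ω
        rw [Finset.sum_ite_eq Finset.univ (J 0 ω)
          (fun j => if (∀ i, a j i ≤ c i) then φf j (R 0 ω) (Mty j ω) else 0)]
        simp only [Finset.mem_univ, if_true]
        rw [hdiffω ω, hxround ω, hxpi ω]
        by_cases hcnd : ∀ i, a (J 0 ω) i ≤ c i
        · rw [if_pos hcnd, hφval]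
          by_cases h1 : Mty (J 0 ω) ω ≤ R 0 ω <;>
            by_cases h2 : Mhat c (a (J 0 ω)) ≤ R 0 ω
          · rw [if_pos ⟨h1, hcnd⟩, if_pos ⟨h2, hcnd⟩, if_pos h1, if_pos h2]
          · rw [if_pos ⟨h1, hcnd⟩, if_neg (fun h => h2 h.1), if_pos h1, if_neg h2]
          · rw [if_neg (fun h => h1 h.1), if_pos ⟨h2, hcnd⟩, if_neg h1, if_pos h2]
          · rw [if_neg (fun h => h1 h.1), if_neg (fun h => h2 h.1), if_neg h1, if_neg h2]
        · rw [if_neg hcnd, if_neg (fun h => hcnd h.2), if_neg (fun h => hcnd h.2)]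
          ring
      -- integrability of each summand
      have htermint : ∀ j : Fin n, Integrable (fun ω => if J 0 ω = j then
          (if (∀ i, a j i ≤ c i) then φf j (R 0 ω) (Mty j ω) else 0) else 0) μ := by
        intro j
        by_cases hcnd : ∀ i, a j i ≤ c i
        · simp only [if_pos hcnd]
          have hmeas : Measurable (fun ω => if J 0 ω = j then φf j (R 0 ω) (Mty j ω) else 0) := by
            refine Measurable.ite (hJ0set j) ?_ measurable_const
            simp only [hφval]
            apply Measurable.mul
            · exact (Measurable.ite (measurableSet_le (hMtymeas j) (hR 0))
                measurable_const measurable_const).sub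
                (Measurable.ite (measurableSet_le measurable_const (hR 0))
                measurable_const measurable_const)
            · exact (hR 0).sub (hMtymeas j)
          refine (integrable_const C).mono' hmeas.aestronglyMeasurable
            (Filter.Eventually.of_forall fun ω => ?_)
          rw [Real.norm_eq_abs]
          by_cases h : J 0 ω = j
          · rw [if_pos h]
            exact hφbd j _ _ (hMtyb j hcnd ω).1 (hMtyb j hcnd ω).2
          · rw [if_neg h, abs_zero]; exact hC0
        · simp only [if_neg hcnd, ite_self]
          exact integrable_const 0
      -- putting the per-type estimates together
      have hstep1 : ∫ ω, diff ω ∂μ ≤ ∑ j, (if (∀ i, a j i ≤ c i) then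
          p j * (αu * ∫ ω, (Mhat c (a j) - Mty j ω)^2 ∂μ) else 0) := by
        calc ∫ ω, diff ω ∂μ
            = ∫ ω, (∑ j, (if J 0 ω = j then
                (if (∀ i, a j i ≤ c i) then φf j (R 0 ω) (Mty j ω) else 0) else 0)) ∂μ :=
              integral_congr_ae (Filter.Eventually.of_forall hdiffsum)
          _ = ∑ j, ∫ ω, (if J 0 ω = j then
                (if (∀ i, a j i ≤ c i) then φf j (R 0 ω) (Mty j ω) else 0) else 0) ∂μ :=
              integral_finset_sum _ (fun j _ => htermint j)
          _ ≤ _ := by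
              refine Finset.sum_le_sum fun j _ => ?_
              by_cases hcnd : ∀ i, a j i ≤ c i
              · rw [if_pos hcnd]
                calc ∫ ω, (if J 0 ω = j then
                      (if (∀ i, a j i ≤ c i) then φf j (R 0 ω) (Mty j ω) else 0) else 0) ∂μ
                    = ∫ ω, (if J 0 ω = j then φf j (R 0 ω) (Mty j ω) else 0) ∂μ := by
                      apply integral_congr_ae
                      refine Filter.Eventually.of_forall fun ω => ?_
                      simp only [if_pos hcnd]
                  _ ≤ _ := hIj j hcnd
              · rw [if_neg hcnd]
                have : (fun ω => (if J 0 ω = j then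
                    (if (∀ i, a j i ≤ c i) then φf j (R 0 ω) (Mty j ω) else 0) else 0))
                    = fun _ => (0:ℝ) := by
                  funext ω
                  rw [if_neg hcnd, ite_self]
                rw [this, integral_const]
                simp
      -- variance-bias decomposition for each type
      have hstep2 : ∀ j : Fin n, (∀ i, a j i ≤ c i) →
          p j * (αu * ∫ ω, (Mhat c (a j) - Mty j ω)^2 ∂μ)
          ≤ 2 * αu * (p j * ∫ ω, (Mty j ω - ∫ ω', Mty j ω' ∂μ)^2 ∂μ)
            + 2 * αu * (p j * (Mhat c (a j) - ∫ ω', Mty j ω' ∂μ)^2) := by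
        intro j hcnd
        set EM := ∫ ω', Mty j ω' ∂μ with hEM
        have hMint : Integrable (Mty j) μ := by
          refine (integrable_const K).mono' (hMtymeas j).aestronglyMeasurable
            (Filter.Eventually.of_forall fun ω => ?_)
          rw [Real.norm_eq_abs, abs_of_nonneg (hMtyb j hcnd ω).1]
          exact (hMtyb j hcnd ω).2
        have hEM0 : 0 ≤ EM := integral_nonneg fun ω => (hMtyb j hcnd ω).1
        have hEMK : EM ≤ K := by
          calc EM ≤ ∫ _ω', K ∂μ :=
              integral_mono hMint (integrable_const K) (fun ω => (hMtyb j hcnd ω).2)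
            _ = K := by simp
        have hsq1 : Integrable (fun ω => (Mhat c (a j) - Mty j ω)^2) μ := by
          refine (integrable_const ((CM + K)^2)).mono'
            ((measurable_const.sub (hMtymeas j)).pow_const 2).aestronglyMeasurable
            (Filter.Eventually.of_forall fun ω => ?_)
          rw [Real.norm_eq_abs, abs_of_nonneg (sq_nonneg _)]
          have h1 := (hMtyb j hcnd ω).1
          have h2 := (hMtyb j hcnd ω).2
          have h3 := hCMb j
          have h4 := le_abs_self (Mhat c (a j))
          have h5 := neg_abs_le (Mhat c (a j))
          nlinarith
        have hsq2 : Integrable (fun ω => (Mty j ω - EM)^2) μ := by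
          refine (integrable_const (K^2)).mono'
            (((hMtymeas j).sub measurable_const).pow_const 2).aestronglyMeasurable
            (Filter.Eventually.of_forall fun ω => ?_)
          rw [Real.norm_eq_abs, abs_of_nonneg (sq_nonneg _)]
          have h1 := (hMtyb j hcnd ω).1
          have h2 := (hMtyb j hcnd ω).2
          nlinarith
        have hptw : ∀ ω, (Mhat c (a j) - Mty j ω)^2
            ≤ 2*(Mty j ω - EM)^2 + 2*(Mhat c (a j) - EM)^2 := by
          intro ω
          nlinarith [sq_nonneg (Mhat c (a j) + Mty j ω - 2*EM)]
        have hintle : ∫ ω, (Mhat c (a j) - Mty j ω)^2 ∂μ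
            ≤ 2*(∫ ω, (Mty j ω - EM)^2 ∂μ) + 2*(Mhat c (a j) - EM)^2 := by
          calc ∫ ω, (Mhat c (a j) - Mty j ω)^2 ∂μ
              ≤ ∫ ω, (2*(Mty j ω - EM)^2 + 2*(Mhat c (a j) - EM)^2) ∂μ :=
                integral_mono hsq1 ((hsq2.const_mul 2).add (integrable_const _)) hptw
            _ = 2*(∫ ω, (Mty j ω - EM)^2 ∂μ) + 2*(Mhat c (a j) - EM)^2 := by
                rw [integral_add (hsq2.const_mul 2) (integrable_const _),
                  integral_const_mul, integral_const]
                simp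
        have hmul := mul_le_mul_of_nonneg_left hintle (mul_nonneg (hp j).le hαu0.le)
        calc p j * (αu * ∫ ω, (Mhat c (a j) - Mty j ω)^2 ∂μ)
            = (p j * αu) * ∫ ω, (Mhat c (a j) - Mty j ω)^2 ∂μ := by ring
          _ ≤ (p j * αu) * (2*(∫ ω, (Mty j ω - EM)^2 ∂μ) + 2*(Mhat c (a j) - EM)^2) := hmul
          _ = 2 * αu * (p j * ∫ ω, (Mty j ω - EM)^2 ∂μ)
              + 2 * αu * (p j * (Mhat c (a j) - EM)^2) := by ring
      -- final assembly
      calc ∫ ω, diff ω ∂μ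
          ≤ ∑ j, (if (∀ i, a j i ≤ c i) then
              p j * (αu * ∫ ω, (Mhat c (a j) - Mty j ω)^2 ∂μ) else 0) := hstep1
        _ ≤ ∑ j, (if (∀ i, a j i ≤ c i) then
              2 * αu * (p j * ∫ ω, (Mty j ω - ∫ ω', Mty j ω' ∂μ)^2 ∂μ)
              + 2 * αu * (p j * (Mhat c (a j) - ∫ ω', Mty j ω' ∂μ)^2) else 0) := by
            refine Finset.sum_le_sum fun j _ => ?_
            by_cases hcnd : ∀ i, a j i ≤ c i
            · rw [if_pos hcnd, if_pos hcnd]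
              exact hstep2 j hcnd
            · rw [if_neg hcnd, if_neg hcnd]
        _ = (∑ j, (if (∀ i, a j i ≤ c i) then
              2 * αu * (p j * ∫ ω, (Mty j ω - ∫ ω', Mty j ω' ∂μ)^2 ∂μ) else 0))
            + ∑ j, (if (∀ i, a j i ≤ c i) then
              2 * αu * (p j * (Mhat c (a j) - ∫ ω', Mty j ω' ∂μ)^2) else 0) := by
            rw [← Finset.sum_add_distrib]
            refine Finset.sum_congr rfl fun j _ => ?_
            by_cases hcnd : ∀ i, a j i ≤ c i
            · rw [if_pos hcnd, if_pos hcnd, if_pos hcnd]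
            · rw [if_neg hcnd, if_neg hcnd, if_neg hcnd]; ring
        _ = (2 * αu * ∑ j, p j *
              (if ∀ i, a j i ≤ c i then ∫ ω, (Mty j ω - ∫ ω', Mty j ω' ∂μ) ^ 2 ∂μ else 0))
            + (2 * αu * ∑ j, p j *
              (if ∀ i, a j i ≤ c i then (Mhat c (a j) - ∫ ω', Mty j ω' ∂μ) ^ 2 else 0)) := by
            rw [Finset.mul_sum, Finset.mul_sum]
            congr 1
            · refine Finset.sum_congr rfl fun j _ => ?_
              by_cases hcnd : ∀ i, a j i ≤ c i
              · rw [if_pos hcnd, if_pos hcnd]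
              · rw [if_neg hcnd, if_neg hcnd]; ring
            · refine Finset.sum_congr rfl fun j _ => ?_
              by_cases hcnd : ∀ i, a j i ≤ c i
              · rw [if_pos hcnd, if_pos hcnd]
              · rw [if_neg hcnd, if_neg hcnd]; ring
    linarith
  · have hnot : ¬ Integrable (fun ω => G ω + diff ω) μ := by
      intro h
      exact hGint (((h.sub hdiffint).congr
        (Filter.Eventually.of_forall fun ω => by simp only [Pi.sub_apply]; ring)) : Integrable G μ)
    rw [integral_undef hnot, integral_undef hGint]
    linarith
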